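/- Let X₁ and X₂ be n×n symmetric positive semidefinite real matrices with X₁ ≥ X₂. Then g_{θ,W}(X₁) ≥ g_{θ,W}(X₂) ≥ Q, i.e. the modified Riccati operator is monotone in X and its values dominate Q. (Proposition 1, item 1.) -/

import Mathlib

open Matrix

/-- The modified Riccati operator
`g_{θ,W}(X) = A X Aᵀ + Q − θ A X Cᵀ (C X Cᵀ + W)⁻¹ C X Aᵀ`. -/
noncomputable def gRic {n m : ℕ} (A Q : Matrix (Fin n) (Fin n) ℝ)
    (C : Matrix (Fin m) (Fin n) ℝ) (W : Matrix (Fin m) (Fin m) ℝ) (θ : ℝ)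
    (X : Matrix (Fin n) (Fin n) ℝ) : Matrix (Fin n) (Fin n) ℝ :=
  A * X * Aᵀ + Q - θ • (A * X * Cᵀ * (C * X * Cᵀ + W)⁻¹ * (C * X * Aᵀ))

/-- Auxiliary: `B * X * Bᵀ` is PSD when `X` is. -/
lemma psd_conj {k l : ℕ} {X : Matrix (Fin k) (Fin k) ℝ} (hX : X.PosSemidef)
    (B : Matrix (Fin l) (Fin k) ℝ) : (B * X * Bᵀ).PosSemidef := by
  simpa [Matrix.conjTranspose_eq_transpose_of_trivial] using hX.mul_mul_conjTranspose_same B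

/-- Auxiliary: nonnegative scalar multiples of PSD matrices are PSD. -/
lemma psd_smul {k : ℕ} {c : ℝ} (hc : 0 ≤ c) {X : Matrix (Fin k) (Fin k) ℝ}
    (hX : X.PosSemidef) : (c • X).PosSemidef := by
  constructor
  · unfold Matrix.IsHermitian
    rw [Matrix.conjTranspose_smul, hX.1.eq, star_trivial]
  · intro x
    convert mul_nonneg hc (hX.2 x) using 1
    simp only [Finsupp.mul_sum, Matrix.smul_apply, smul_eq_mul]
    refine Finsupp.sum_congr fun i _ => Finsupp.sum_congr fun j _ => ?_
    ring

/-- The auxiliary quadratic functional used in the completion-of-squares argument. -/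
noncomputable def phiRic {n m : ℕ} (A Q : Matrix (Fin n) (Fin n) ℝ)
    (C : Matrix (Fin m) (Fin n) ℝ) (W : Matrix (Fin m) (Fin m) ℝ) (θ : ℝ)
    (K : Matrix (Fin n) (Fin m) ℝ) (X : Matrix (Fin n) (Fin n) ℝ) :
    Matrix (Fin n) (Fin n) ℝ :=
  (1 - θ) • (A * X * Aᵀ) + θ • ((A + K * C) * X * (A + K * C)ᵀ + K * W * Kᵀ) + Q

/-- Completion of squares. -/
lemma phiRic_eq {n m : ℕ} (A Q : Matrix (Fin n) (Fin n) ℝ)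
    (C : Matrix (Fin m) (Fin n) ℝ) (W : Matrix (Fin m) (Fin m) ℝ) (θ : ℝ)
    (K : Matrix (Fin n) (Fin m) ℝ) (X : Matrix (Fin n) (Fin n) ℝ)
    (hX : Xᵀ = X) (hWs : Wᵀ = W) (hdet : IsUnit (C * X * Cᵀ + W).det) :
    phiRic A Q C W θ K X = gRic A Q C W θ X +
      θ • ((K + A * X * Cᵀ * (C * X * Cᵀ + W)⁻¹) * (C * X * Cᵀ + W) *
        (K + A * X * Cᵀ * (C * X * Cᵀ + W)⁻¹)ᵀ) := by
  set S := C * X * Cᵀ + W with hS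
  set N := A * X * Cᵀ * S⁻¹ with hN
  clear_value S N
  have hSs : Sᵀ = S := by
    rw [hS, transpose_add, hWs, transpose_mul, transpose_mul, transpose_transpose, hX,
      Matrix.mul_assoc]
  have hNT : Nᵀ = S⁻¹ * (C * X * Aᵀ) := by
    simp [hN, transpose_mul, transpose_nonsing_inv, hSs, hX, Matrix.mul_assoc]
  have hNS : N * S = A * X * Cᵀ := by
    rw [hN, Matrix.mul_assoc, Matrix.nonsing_inv_mul _ hdet, Matrix.mul_one]
  have hSNT : S * Nᵀ = C * X * Aᵀ := by
    rw [hNT, ← Matrix.mul_assoc, Matrix.mul_nonsing_inv _ hdet, Matrix.one_mul]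
  have hexp : (K + N) * S * (K + N)ᵀ =
      K * S * Kᵀ + K * (C * X * Aᵀ) + A * X * Cᵀ * Kᵀ +
        A * X * Cᵀ * (S⁻¹ * (C * X * Aᵀ)) := by
    rw [transpose_add, Matrix.mul_add, Matrix.add_mul K N S, hNS, Matrix.add_mul,
      Matrix.add_mul, Matrix.mul_assoc K S Nᵀ, hSNT, hNT]
    abel
  have hinner : (A + K * C) * X * (A + K * C)ᵀ + K * W * Kᵀ =
      A * X * Aᵀ + (K * S * Kᵀ + K * (C * X * Aᵀ) + A * X * Cᵀ * Kᵀ) := by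
    rw [hS, transpose_add, transpose_mul]
    simp only [Matrix.add_mul, Matrix.mul_add, Matrix.mul_assoc]
    abel
  have hgr : A * X * Cᵀ * S⁻¹ * (C * X * Aᵀ) = A * X * Cᵀ * (S⁻¹ * (C * X * Aᵀ)) := by
    rw [Matrix.mul_assoc]
  rw [phiRic, gRic, hinner, hexp, ← hS, hgr]
  rw [sub_smul, one_smul]
  simp only [smul_add]
  abel

/-- `phiRic` is monotone in `X` in the obvious way. -/
lemma phiRic_sub {n m : ℕ} (A Q : Matrix (Fin n) (Fin n) ℝ)
    (C : Matrix (Fin m) (Fin n) ℝ) (W : Matrix (Fin m) (Fin m) ℝ) (θ : ℝ)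
    (K : Matrix (Fin n) (Fin m) ℝ) (X₁ X₂ : Matrix (Fin n) (Fin n) ℝ) :
    phiRic A Q C W θ K X₁ - phiRic A Q C W θ K X₂ =
      (1 - θ) • (A * (X₁ - X₂) * Aᵀ) +
        θ • ((A + K * C) * (X₁ - X₂) * (A + K * C)ᵀ) := by
  simp only [phiRic, Matrix.mul_sub, Matrix.sub_mul, smul_sub, smul_add]
  abel

/-- Proposition 1, item 1: monotonicity of the modified Riccati operator in `X`,
and domination of `Q`. -/
theorem gRic_monotone_and_ge_Q {n m : ℕ} (A Q : Matrix (Fin n) (Fin n) ℝ)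
    (C : Matrix (Fin m) (Fin n) ℝ) (W : Matrix (Fin m) (Fin m) ℝ) (θ : ℝ)
    (hQ : Q.PosSemidef) (hW : W.PosDef) (hθ : θ ∈ Set.Ioc (0 : ℝ) 1)
    (X₁ X₂ : Matrix (Fin n) (Fin n) ℝ)
    (hX₁ : X₁.PosSemidef) (hX₂ : X₂.PosSemidef)
    (h12 : (X₁ - X₂).PosSemidef) :
    (gRic A Q C W θ X₁ - gRic A Q C W θ X₂).PosSemidef ∧
      (gRic A Q C W θ X₂ - Q).PosSemidef := by
  have hθ0 : (0 : ℝ) ≤ θ := le_of_lt hθ.1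
  have hθ1 : (0 : ℝ) ≤ 1 - θ := by linarith [hθ.2]
  have hWs : Wᵀ = W := by
    rw [← Matrix.conjTranspose_eq_transpose_of_trivial]; exact hW.isHermitian.eq
  have hX₁s : X₁ᵀ = X₁ := by
    rw [← Matrix.conjTranspose_eq_transpose_of_trivial]; exact hX₁.isHermitian.eq
  have hX₂s : X₂ᵀ = X₂ := by
    rw [← Matrix.conjTranspose_eq_transpose_of_trivial]; exact hX₂.isHermitian.eq
  have hS₁ : (C * X₁ * Cᵀ + W).PosDef := Matrix.PosDef.posSemidef_add (psd_conj hX₁ C) hW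
  have hS₂ : (C * X₂ * Cᵀ + W).PosDef := Matrix.PosDef.posSemidef_add (psd_conj hX₂ C) hW
  have hdet₁ : IsUnit (C * X₁ * Cᵀ + W).det := hS₁.det_pos.ne'.isUnit
  have hdet₂ : IsUnit (C * X₂ * Cᵀ + W).det := hS₂.det_pos.ne'.isUnit
  set K₁ := -(A * X₁ * Cᵀ * (C * X₁ * Cᵀ + W)⁻¹) with hK₁
  set K₂ := -(A * X₂ * Cᵀ * (C * X₂ * Cᵀ + W)⁻¹) with hK₂
  have hg1 : phiRic A Q C W θ K₁ X₁ = gRic A Q C W θ X₁ := by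
    rw [phiRic_eq A Q C W θ K₁ X₁ hX₁s hWs hdet₁, hK₁, neg_add_cancel, Matrix.zero_mul,
      Matrix.zero_mul, smul_zero, add_zero]
  have hg2 : phiRic A Q C W θ K₂ X₂ = gRic A Q C W θ X₂ := by
    rw [phiRic_eq A Q C W θ K₂ X₂ hX₂s hWs hdet₂, hK₂, neg_add_cancel, Matrix.zero_mul,
      Matrix.zero_mul, smul_zero, add_zero]
  have h21 := phiRic_eq A Q C W θ K₁ X₂ hX₂s hWs hdet₂
  constructor
  · have hkey : gRic A Q C W θ X₁ - gRic A Q C W θ X₂ =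
        ((1 - θ) • (A * (X₁ - X₂) * Aᵀ) +
          θ • ((A + K₁ * C) * (X₁ - X₂) * (A + K₁ * C)ᵀ)) +
        θ • ((K₁ + A * X₂ * Cᵀ * (C * X₂ * Cᵀ + W)⁻¹) * (C * X₂ * Cᵀ + W) *
          (K₁ + A * X₂ * Cᵀ * (C * X₂ * Cᵀ + W)⁻¹)ᵀ) := by
      rw [← hg1, ← phiRic_sub A Q C W θ K₁ X₁ X₂]
      rw [show gRic A Q C W θ X₂ = phiRic A Q C W θ K₁ X₂ -
        θ • ((K₁ + A * X₂ * Cᵀ * (C * X₂ * Cᵀ + W)⁻¹) * (C * X₂ * Cᵀ + W) *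
          (K₁ + A * X₂ * Cᵀ * (C * X₂ * Cᵀ + W)⁻¹)ᵀ) from by rw [h21]; abel]
      abel
    rw [hkey]
    exact ((psd_smul hθ1 (psd_conj h12 A)).add
      (psd_smul hθ0 (psd_conj h12 (A + K₁ * C)))).add
      (psd_smul hθ0 (psd_conj hS₂.posSemidef _))
  · have : gRic A Q C W θ X₂ - Q = (1 - θ) • (A * X₂ * Aᵀ) +
        θ • ((A + K₂ * C) * X₂ * (A + K₂ * C)ᵀ + K₂ * W * K₂ᵀ) := by
      rw [← hg2, phiRic, add_sub_cancel_right]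
    rw [this]
    exact (psd_smul hθ1 (psd_conj hX₂ A)).add
      (psd_smul hθ0 ((psd_conj hX₂ (A + K₂ * C)).add (psd_conj hW.posSemidef K₂)))
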